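/- Let F ⊂ T_N and suppose that for every x ∈ F the quantity r_x + 2 is at most 3·l_N, where r_x ≥ 0. Define for any subset S ⊆ F the modified total distance Mdist(S) = Σ_{x ∈ R(S)} (r_x + 2) + 3·l_N·(|S| - |R(S)|), where R(S) is the set of representatives of connected components of the auxiliary graph G(S). Then Mdist is monotone: for S ⊆ S' ⊆ F, Mdist(S) ≤ Mdist(S'). -/

import Mathlib

attribute [local instance] Classical.propDecidable

/-- Distance on the cycle `ℤ/Nℤ`. -/
def tdist (N : ℕ) (a b : ZMod N) : ℕ := min (a - b).val (b - a).val

/-- `ℓ^∞`-distance on the torus `(ℤ/Nℤ)^d`. -/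
def dinf (d N : ℕ) (x y : Fin d → ZMod N) : ℕ :=
  Finset.univ.sup fun i => tdist N (x i) (y i)

lemma dinf_comm (d N : ℕ) (x y : Fin d → ZMod N) : dinf d N x y = dinf d N y x :=
  Finset.sup_congr rfl fun i _ => min_comm _ _

/-- The auxiliary graph on a subset `S` of the torus: edges between distinct
points of `S` at `ℓ^∞`-distance at most `3·l_N`. -/
def auxG (d N lN : ℕ) (S : Finset (Fin d → ZMod N)) :
    SimpleGraph (Fin d → ZMod N) where
  Adj a b := a ≠ b ∧ a ∈ S ∧ b ∈ S ∧ dinf d N a b ≤ 3 * lN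
  symm := by
    constructor
    intro a b h
    exact ⟨h.1.symm, h.2.2.1, h.2.1, by rw [dinf_comm]; exact h.2.2.2⟩
  loopless := ⟨fun a h => h.1 rfl⟩

/-- The set of representatives: the minimal-label vertex of each connected
component of the auxiliary graph `G(S)`. -/
noncomputable def reps (d N lN : ℕ) (label : (Fin d → ZMod N) → ℕ)
    (S : Finset (Fin d → ZMod N)) : Finset (Fin d → ZMod N) :=
  S.filter fun x => ∀ y ∈ S, (auxG d N lN S).Reachable x y → label x ≤ label y

/-- The modified total distance
`Mdist(S) = Σ_{x ∈ R(S)} (r_x + 2) + 3·l_N·(|S| - |R(S)|)`. -/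
noncomputable def Mdist (d N lN : ℕ) (label : (Fin d → ZMod N) → ℕ)
    (r : (Fin d → ZMod N) → ℝ) (S : Finset (Fin d → ZMod N)) : ℝ :=
  (∑ x ∈ reps d N lN label S, (r x + 2)) +
    3 * lN * ((S.card : ℝ) - ((reps d N lN label S).card : ℝ))

lemma reps_subset (d N lN : ℕ) (label : (Fin d → ZMod N) → ℕ)
    (S : Finset (Fin d → ZMod N)) : reps d N lN label S ⊆ S :=
  Finset.filter_subset _ _

lemma Mdist_eq_sum (d N lN : ℕ) (label : (Fin d → ZMod N) → ℕ)
    (r : (Fin d → ZMod N) → ℝ) (S : Finset (Fin d → ZMod N)) :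
    Mdist d N lN label r S =
      ∑ x ∈ S, (if x ∈ reps d N lN label S then r x + 2 else 3 * lN) := by
  have hsub := reps_subset d N lN label S
  rw [← Finset.sum_sdiff hsub]
  have h1 : ∑ x ∈ S \ reps d N lN label S,
      (if x ∈ reps d N lN label S then r x + 2 else 3 * (lN:ℝ)) =
      ((S.card : ℝ) - ((reps d N lN label S).card : ℝ)) * (3 * lN) := by
    rw [Finset.sum_congr rfl (fun x hx => if_neg (Finset.mem_sdiff.mp hx).2),
      Finset.sum_const, Finset.card_sdiff_of_subset hsub, nsmul_eq_mul,
      Nat.cast_sub (Finset.card_le_card hsub)]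
  have h2 : ∑ x ∈ reps d N lN label S,
      (if x ∈ reps d N lN label S then r x + 2 else 3 * (lN:ℝ)) =
      ∑ x ∈ reps d N lN label S, (r x + 2) :=
    Finset.sum_congr rfl fun x hx => if_pos hx
  rw [h1, h2, Mdist]
  ring

lemma auxG_mono (d N lN : ℕ) {S S' : Finset (Fin d → ZMod N)} (h : S ⊆ S') :
    auxG d N lN S ≤ auxG d N lN S' := by
  intro a b hab
  show a ≠ b ∧ a ∈ S' ∧ b ∈ S' ∧ dinf d N a b ≤ 3 * lN
  exact ⟨hab.1, h hab.2.1, h hab.2.2.1, hab.2.2.2⟩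

lemma mem_reps_of_mem (d N lN : ℕ) (label : (Fin d → ZMod N) → ℕ)
    {S S' : Finset (Fin d → ZMod N)} (h : S ⊆ S')
    {x : Fin d → ZMod N} (hxS : x ∈ S) (hx : x ∈ reps d N lN label S') :
    x ∈ reps d N lN label S := by
  rw [reps, Finset.mem_filter] at hx ⊢
  exact ⟨hxS, fun y hy hre =>
    hx.2 y (h hy) (hre.mono (auxG_mono d N lN h))⟩

/-- monotonicity of the modified total distance: if `r_x + 2 ≤ 3 l_N`
for all `x ∈ F`, then `Mdist(S) ≤ Mdist(S')` whenever `S ⊆ S' ⊆ F`. -/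
theorem stmt14 (d N lN : ℕ) (label : (Fin d → ZMod N) → ℕ)
    (hlabel : Function.Injective label)
    (F : Finset (Fin d → ZMod N)) (r : (Fin d → ZMod N) → ℝ)
    (hr : ∀ x ∈ F, 0 ≤ r x) (hrb : ∀ x ∈ F, r x + 2 ≤ 3 * lN)
    (S S' : Finset (Fin d → ZMod N)) (hSS' : S ⊆ S') (hS'F : S' ⊆ F) :
    Mdist d N lN label r S ≤ Mdist d N lN label r S' := by
  rw [Mdist_eq_sum, Mdist_eq_sum]
  have hlN : (0:ℝ) ≤ 3 * lN := by positivity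
  calc ∑ x ∈ S, (if x ∈ reps d N lN label S then r x + 2 else 3 * (lN:ℝ))
      ≤ ∑ x ∈ S, (if x ∈ reps d N lN label S' then r x + 2 else 3 * (lN:ℝ)) := by
        refine Finset.sum_le_sum fun x hx => ?_
        by_cases h' : x ∈ reps d N lN label S'
        · rw [if_pos h', if_pos (mem_reps_of_mem d N lN label hSS' hx h')]
        · rw [if_neg h']
          split
          · exact hrb x (hS'F (hSS' hx))
          · exact le_rfl
    _ ≤ ∑ x ∈ S', (if x ∈ reps d N lN label S' then r x + 2 else 3 * (lN:ℝ)) := by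
        refine Finset.sum_le_sum_of_subset_of_nonneg hSS' fun x hx _ => ?_
        split
        · have := hr x (hS'F hx); linarith
        · exact hlN
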